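/- Let X be a compact metrizable topological space with its Borel σ-algebra, let ν and λ be Borel probability measures on X, and let (g_n) be a sequence of continuous maps g_n : X → X such that the pushforward measures (g_n)_*ν converge weakly to λ. Suppose there is a Borel subset E ⊆ X with ν(E) = 1 and a closed subset Ω ⊆ X such that for every x ∈ E, every cluster point of the sequence (g_n(x))_{n∈ℕ} belongs to Ω. Then λ(Ω) = 1. -/

import Mathlib

open MeasureTheory Filter

/-- **(Kaimanovich–Masur, Lemma 1.5.5.)** Let `X` be a compact metrizable space, `ν` and `lam`
Borel probability measures on `X`, and `(g n)` a sequence of continuous self-maps of `X` such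
that the pushforwards `(g n)_* ν` converge weakly to `lam`. If there is a Borel set `E` of
full `ν`-measure and a closed set `Ω` containing all cluster points of every sequence
`(g n x)` with `x ∈ E`, then `lam Ω = 1`. -/
theorem weak_limit_supported_on_cluster_set
    {X : Type*} [TopologicalSpace X] [CompactSpace X] [TopologicalSpace.MetrizableSpace X]
    [MeasurableSpace X] [BorelSpace X]
    (ν lam : Measure X) [IsProbabilityMeasure ν] [IsProbabilityMeasure lam]
    (g : ℕ → X → X) (hg : ∀ n, Continuous (g n))
    (hconv : ∀ f : C(X, ℝ),
      Tendsto (fun n => ∫ x, f x ∂(ν.map (g n))) atTop (nhds (∫ x, f x ∂lam)))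
    (E : Set X) (hE : MeasurableSet E) (hνE : ν E = 1)
    (Ω : Set X) (hΩ : IsClosed Ω)
    (hcluster : ∀ x ∈ E, ∀ y : X, MapClusterPt y atTop (fun n => g n x) → y ∈ Ω) :
    lam Ω = 1 := by
  letI := TopologicalSpace.metrizableSpaceMetric X
  -- For every `x ∈ E` and open `V ⊇ Ω`, eventually `g n x ∈ V`.
  have hev : ∀ x ∈ E, ∀ V : Set X, IsOpen V → Ω ⊆ V → ∀ᶠ n in atTop, g n x ∈ V := by
    intro x hx V hV hΩV
    by_contra hc
    rw [not_eventually] at hc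
    have hne : (Filter.map (fun n => g n x) atTop ⊓ 𝓟 Vᶜ).NeBot := by
      rw [inf_principal_neBot_iff]
      intro U hU
      rw [mem_map] at hU
      rcases (hc.and_eventually hU).exists with ⟨n, hn1, hn2⟩
      exact ⟨g n x, hn2, hn1⟩
    obtain ⟨y, hy⟩ := exists_clusterPt_of_compactSpace
      (Filter.map (fun n => g n x) atTop ⊓ 𝓟 Vᶜ)
    have hy1 : MapClusterPt y atTop (fun n => g n x) :=
      (hy.mono inf_le_left : ClusterPt y _)
    have hy2 : y ∈ Vᶜ := by
      have h2 : ClusterPt y (𝓟 Vᶜ) := hy.mono inf_le_right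
      have h3 : y ∈ closure Vᶜ := mem_closure_iff_clusterPt.mpr h2
      rwa [hV.isClosed_compl.closure_eq] at h3
    exact hy2 (hΩV (hcluster x hx y hy1))
  -- Main step: `lam U = 1` for every open `U ⊇ Ω`.
  have key : ∀ U : Set X, IsOpen U → Ω ⊆ U → lam U = 1 := by
    intro U hU hΩU
    obtain ⟨f, hf0, hf1, hf01⟩ := exists_continuous_zero_one_of_isClosed
      hU.isClosed_compl hΩ (by simpa [Set.disjoint_compl_left_iff_subset] using hΩU)
    -- `f (g n x) → 1` for `x ∈ E`
    have hptw : ∀ x ∈ E, Tendsto (fun n => f (g n x)) atTop (nhds 1) := by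
      intro x hx
      rw [tendsto_nhds]
      intro W hW h1W
      have hV : IsOpen (f ⁻¹' W) := hW.preimage f.continuous
      have hΩV : Ω ⊆ f ⁻¹' W := fun y hy => by
        simp only [Set.mem_preimage, hf1 hy]; exact h1W
      exact hev x hx _ hV hΩV
    -- Dominated convergence for `∫ f (g n x) dν`
    have hdom : Tendsto (fun n => ∫ x, f (g n x) ∂ν) atTop (nhds (∫ _x, (1:ℝ) ∂ν)) := by
      apply tendsto_integral_of_dominated_convergence (fun _ => (1:ℝ))
      · exact fun n => (f.continuous.comp (hg n)).aestronglyMeasurable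
      · exact integrable_const 1
      · intro n
        filter_upwards with x
        have := hf01 (g n x)
        simp only [Set.mem_Icc] at this
        rw [Real.norm_eq_abs, abs_le]
        exact ⟨by linarith [this.1], this.2⟩
      · have hEc : ν Eᶜ = 0 := by
          rw [measure_compl hE (measure_ne_top ν E), measure_univ, hνE, tsub_self]
        have hEae : ∀ᵐ x ∂ν, x ∈ E := by
          rw [ae_iff]
          exact hEc
        filter_upwards [hEae] with x hx
        exact hptw x hx
    have hone : (∫ _x, (1:ℝ) ∂ν) = 1 := by simp
    -- rewrite pushforward integrals
    have heq : ∀ n, ∫ x, f x ∂(ν.map (g n)) = ∫ x, f (g n x) ∂ν := by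
      intro n
      exact integral_map (hg n).aemeasurable f.continuous.aestronglyMeasurable
    have hlim : (∫ x, f x ∂lam) = 1 := by
      have h1 := hconv f
      rw [show (fun n => ∫ x, f x ∂(ν.map (g n))) = fun n => ∫ x, f (g n x) ∂ν from
        funext heq] at h1
      rw [hone] at hdom
      exact tendsto_nhds_unique h1 hdom
    -- `∫ f dlam ≤ lam U`
    have hfle : (∫ x, f x ∂lam) ≤ (lam U).toReal := by
      have : (∫ x, f x ∂lam) ≤ ∫ x, Set.indicator U (fun _ => (1:ℝ)) x ∂lam := by
        apply integral_mono
        · refine (integrable_const (1:ℝ)).mono' f.continuous.aestronglyMeasurable ?_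
          filter_upwards with x
          have hx := hf01 x
          simp only [Set.mem_Icc] at hx
          rw [Real.norm_eq_abs, abs_le]
          exact ⟨by linarith [hx.1], hx.2⟩
        · exact (integrable_const (1:ℝ)).indicator hU.measurableSet
        · intro x
          by_cases hxU : x ∈ U
          · simp [Set.indicator_of_mem hxU, (hf01 x).2]
          · rw [Set.indicator_of_notMem hxU]
            exact (hf0 (Set.mem_compl hxU)).le
      rwa [integral_indicator_const (1:ℝ) hU.measurableSet, smul_eq_mul, mul_one] at this
    have hUle : (1:ENNReal) ≤ lam U := by
      have h1 : (1:ℝ) ≤ (lam U).toReal := hlim ▸ hfle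
      have := ENNReal.ofReal_le_ofReal h1
      rwa [ENNReal.ofReal_one, ENNReal.ofReal_toReal (measure_ne_top lam U)] at this
    exact le_antisymm prob_le_one hUle
  -- Conclude by outer regularity.
  have := Set.measure_eq_iInf_isOpen Ω lam
  rw [this]
  apply le_antisymm
  · exact iInf_le_of_le Set.univ (iInf_le_of_le (Set.subset_univ Ω)
      (iInf_le_of_le isOpen_univ (le_of_eq (key _ isOpen_univ (Set.subset_univ Ω)))))
  · simp only [le_iInf_iff]
    intro U hΩU hU
    exact (key U hU hΩU).ge
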